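/- arXiv:2003.04160 — 5 statements merged into one kernel-verified Lean document; each statement's English description precedes it below -/
import Mathlib

section
/- Let (A, Φ) be a C*-dynamical system with Φ a unital *-homomorphism, λ ∈ 𝕋, and suppose u ∈ A_λ is an isometry (u*u = 1). Then for every Φ-invariant state ω, the vector π_ω(u) ξ_ω is a unit eigenvector of the covariant GNS isometry V_{ω,Φ} with eigenvalue λ; in particular λ belongs to the full peripheral pure-point spectrum σ_pp^{(ph,f)}(Φ). -/
open scoped InnerProductSpace

universe u

/-- A covariant cyclic (GNS) representation of a C*-dynamical system `(A, Φ)`,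
corresponding to a `Φ`-invariant state (every `Φ`-invariant state gives rise to
such a representation via the GNS construction, and conversely the vector state
of such a representation is `Φ`-invariant). -/
structure CovGNS {A : Type*} [NormedRing A] [StarRing A] [CStarRing A]
    [NormedAlgebra ℂ A] [StarModule ℂ A] [CompleteSpace A]
    (Φ : A →⋆ₐ[ℂ] A) where
  H : Type u
  [grp : NormedAddCommGroup H]
  [ips : InnerProductSpace ℂ H]
  [cpl : CompleteSpace H]
  π : A →⋆ₐ[ℂ] (H →L[ℂ] H)
  ξ : H
  V : H →L[ℂ] H
  norm_ξ : ‖ξ‖ = 1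
  cyclic : Dense ((Submodule.span ℂ (Set.range fun a : A => π a ξ) : Submodule ℂ H) : Set H)
  isom : ∀ x : H, ‖V x‖ = ‖x‖
  fixes : V ξ = ξ
  covariant : ∀ a : A, V (π a ξ) = π (Φ a) ξ

attribute [instance] CovGNS.grp CovGNS.ips CovGNS.cpl

/-- If `u ∈ A_λ` is an isometry (`u* u = 1`) with `λ ∈ 𝕋`, then for
every `Φ`-invariant state `ω` the vector `π_ω(u) ξ_ω` is a unit eigenvector of the
covariant GNS isometry `V_{ω,Φ}` with eigenvalue `λ`; in particular `λ` lies in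
the full peripheral pure-point spectrum `σ_pp^{(ph,f)}(Φ)`. -/
theorem isometry_eigenvector_gives_full_spectrum
    {A : Type*} [NormedRing A] [StarRing A] [CStarRing A] [NormedAlgebra ℂ A]
    [StarModule ℂ A] [CompleteSpace A]
    (Φ : A →⋆ₐ[ℂ] A) (lam : ℂ) (hlam : ‖lam‖ = 1)
    (u : A) (hu : star u * u = 1) (hΦu : Φ u = lam • u) :
    ∀ R : CovGNS Φ,
      ‖R.π u R.ξ‖ = 1 ∧ R.V (R.π u R.ξ) = lam • R.π u R.ξ ∧
        ∃ x : R.H, x ≠ 0 ∧ R.V x = lam • x := by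
  intro R
  have hnorm : ‖R.π u R.ξ‖ = 1 := by
    have h1 : @inner ℂ _ _ (R.π u R.ξ) (R.π u R.ξ) = @inner ℂ _ _ R.ξ R.ξ := by
      calc @inner ℂ _ _ (R.π u R.ξ) (R.π u R.ξ)
          = @inner ℂ _ _ R.ξ ((ContinuousLinearMap.adjoint (R.π u)) (R.π u R.ξ)) := by
            rw [ContinuousLinearMap.adjoint_inner_right]
        _ = @inner ℂ _ _ R.ξ ((star (R.π u)) (R.π u R.ξ)) := by
            rw [ContinuousLinearMap.star_eq_adjoint]
        _ = @inner ℂ _ _ R.ξ (R.π (star u) (R.π u R.ξ)) := by rw [map_star]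
        _ = @inner ℂ _ _ R.ξ (R.π (star u * u) R.ξ) := by
            rw [map_mul]; rfl
        _ = @inner ℂ _ _ R.ξ R.ξ := by rw [hu, map_one]; rfl
    rw [inner_self_eq_norm_sq_to_K, inner_self_eq_norm_sq_to_K] at h1
    have h3 : ‖R.π u R.ξ‖ ^ 2 = ‖R.ξ‖ ^ 2 := by exact_mod_cast h1
    have := R.norm_ξ
    nlinarith [norm_nonneg (R.π u R.ξ), norm_nonneg R.ξ]
  have heig : R.V (R.π u R.ξ) = lam • R.π u R.ξ := by
    rw [R.covariant, hΦu, map_smul]; rfl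
  refine ⟨hnorm, heig, R.π u R.ξ, ?_, heig⟩
  intro h
  rw [h, norm_zero] at hnorm
  norm_num at hnorm
end

section
/- Let (A, Φ) be uniquely ergodic with respect to the fixed-point subalgebra, i.e. the averages (1/n) ∑_{k=0}^{n-1} Φ^k converge pointwise in norm to a conditional expectation E₁ onto A^Φ. If λ ∈ 𝕋 and u ∈ A_λ is an isometry, then for every x ∈ A, (1/n) ∑_{k=0}^{n-1} λ^{-k} Φ^k(x) converges in norm to E₁(x u*) u. -/
open Filter Finset

/-- Let `(A, Φ)` be uniquely ergodic with respect to the fixed-point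
subalgebra, i.e. the averages `(1/n) ∑_{k<n} Φ^k(x)` converge in norm to `E₁ x`
for every `x`. If `λ ∈ 𝕋` and `u ∈ A_λ` is an isometry (`u* u = 1`), then for
every `x ∈ A` the averages `(1/n) ∑_{k<n} λ^{-k} Φ^k(x)` converge in norm to
`E₁(x u*) u`. -/
theorem cesaro_tendsto_E_isometry
    {A : Type*} [NormedRing A] [StarRing A] [CStarRing A] [NormedAlgebra ℂ A]
    [StarModule ℂ A] [CompleteSpace A]
    (Φ : A →⋆ₐ[ℂ] A) (E₁ : A → A)
    (hE : ∀ x : A,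
      Tendsto (fun n : ℕ => (n : ℂ)⁻¹ • ∑ k ∈ range n, (⇑Φ)^[k] x)
        atTop (nhds (E₁ x)))
    (lam : ℂ) (hlam : ‖lam‖ = 1)
    (u : A) (hu : star u * u = 1) (hΦu : Φ u = lam • u) (x : A) :
    Tendsto (fun n : ℕ => (n : ℂ)⁻¹ • ∑ k ∈ range n, lam⁻¹ ^ k • (⇑Φ)^[k] x)
      atTop (nhds (E₁ (x * star u) * u)) := by
  have hinv : lam⁻¹ = star lam := by
    have h1 : star lam * lam = 1 := by
      have h2 := Complex.normSq_eq_conj_mul_self (z := lam)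
      have h3 : Complex.normSq lam = 1 := by
        rw [Complex.normSq_eq_norm_sq, hlam]; norm_num
      rw [h3] at h2
      exact_mod_cast h2.symm
    exact inv_eq_of_mul_eq_one_left h1
  have hΦku : ∀ k : ℕ, (⇑Φ)^[k] u = lam ^ k • u := by
    intro k
    induction k with
    | zero => simp
    | succ n ih =>
      rw [Function.iterate_succ_apply', ih, map_smul, hΦu, smul_smul, pow_succ]
  have key : ∀ k : ℕ, (⇑Φ)^[k] (x * star u) * u = lam⁻¹ ^ k • (⇑Φ)^[k] x := by
    intro k
    have hiter : (⇑Φ)^[k] (x * star u) = (⇑Φ)^[k] x * (⇑Φ)^[k] (star u) := by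
      induction k with
      | zero => simp
      | succ n ih => simp [Function.iterate_succ_apply', ih, map_mul]
    have hstar : (⇑Φ)^[k] (star u) = lam⁻¹ ^ k • star u := by
      have : (⇑Φ)^[k] (star u) = star ((⇑Φ)^[k] u) := by
        induction k with
        | zero => simp
        | succ n ih => simp [Function.iterate_succ_apply', ih, map_star]
      rw [this, hΦku, star_smul, hinv, star_pow]
    rw [hiter, hstar, mul_smul_comm, smul_mul_assoc, mul_assoc, hu, mul_one]
  have heq : ∀ n : ℕ, ((n : ℂ)⁻¹ • ∑ k ∈ range n, (⇑Φ)^[k] (x * star u)) * u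
      = (n : ℂ)⁻¹ • ∑ k ∈ range n, lam⁻¹ ^ k • (⇑Φ)^[k] x := by
    intro n
    rw [smul_mul_assoc, Finset.sum_mul]
    congr 1
    exact Finset.sum_congr rfl fun k _ => key k
  have := (hE (x * star u)).mul_const u
  simpa only [heq] using this
end

section
/- Let (A, Φ) be uniquely ergodic with respect to the fixed-point subalgebra with conditional expectation E₁, λ ∈ 𝕋, and u ∈ A_λ a co-isometry (uu* = 1). Then for every x ∈ A, (1/n) ∑_{k=0}^{n-1} λ^{-k} Φ^k(x) converges in norm to u E₁(u* x). Moreover the resulting map E_λ(x) := u E₁(u* x) is a norm-one linear projection of A onto A_λ. -/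
open Filter Finset

/-- Let `(A, Φ)` be uniquely ergodic with respect to the fixed-point
subalgebra, with conditional expectation `E₁` the pointwise norm limit of the
Cesàro averages. If `λ ∈ 𝕋` and `u ∈ A_λ` is a co-isometry (`u u* = 1`), then for
every `x ∈ A` the averages `(1/n) ∑_{k<n} λ^{-k} Φ^k(x)` converge in norm to
`u E₁(u* x)`; moreover `E_λ(x) := u E₁(u* x)` is a norm-one linear projection of
`A` onto the eigenspace `A_λ`. -/
theorem cesaro_tendsto_E_coisometry
    {A : Type*} [NormedRing A] [StarRing A] [CStarRing A] [NormedAlgebra ℂ A]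
    [StarModule ℂ A] [CompleteSpace A]
    (Φ : A →⋆ₐ[ℂ] A) (E₁ : A → A)
    (hE : ∀ x : A,
      Tendsto (fun n : ℕ => (n : ℂ)⁻¹ • ∑ k ∈ range n, (⇑Φ)^[k] x)
        atTop (nhds (E₁ x)))
    (lam : ℂ) (hlam : ‖lam‖ = 1)
    (u : A) (hu : u * star u = 1) (hΦu : Φ u = lam • u) :
    (∀ x : A,
      Tendsto (fun n : ℕ => (n : ℂ)⁻¹ • ∑ k ∈ range n, lam⁻¹ ^ k • (⇑Φ)^[k] x)
        atTop (nhds (u * E₁ (star u * x)))) ∧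
    -- `E_λ` is linear
    (∀ x y : A, u * E₁ (star u * (x + y)) = u * E₁ (star u * x) + u * E₁ (star u * y)) ∧
    (∀ (c : ℂ) (x : A), u * E₁ (star u * (c • x)) = c • (u * E₁ (star u * x))) ∧
    -- `E_λ` is a contraction, hence (being a projection onto `A_λ ∋ u`) has norm one
    (∀ x : A, ‖u * E₁ (star u * x)‖ ≤ ‖x‖) ∧
    -- `E_λ` takes values in `A_λ` and restricts to the identity on `A_λ`:
    (∀ x : A, Φ (u * E₁ (star u * x)) = lam • (u * E₁ (star u * x))) ∧
    (∀ y : A, Φ y = lam • y → u * E₁ (star u * y) = y) := by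
  letI : CStarAlgebra A := { }
  have hΦnorm : ∀ a : A, ‖Φ a‖ ≤ ‖a‖ := fun a => NonUnitalStarAlgHom.norm_apply_le Φ a
  have hΦcont : Continuous (⇑Φ) :=
    AddMonoidHomClass.continuous_of_bound Φ 1 (fun a => by simpa using hΦnorm a)
  have hlam0 : lam ≠ 0 := by
    intro h; rw [h] at hlam; simp at hlam
  have hconj : (starRingEnd ℂ) lam = lam⁻¹ := by
    refine (inv_eq_of_mul_eq_one_right ?_).symm
    have := Complex.mul_conj' lam
    rw [this]
    norm_cast
    rw [hlam]; norm_num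
  have hΦu' : Φ (star u) = lam⁻¹ • star u := by
    rw [map_star, hΦu, star_smul, Complex.star_def, hconj]
  -- key multiplicative identity
  have key : ∀ (k : ℕ) (x : A), (⇑Φ)^[k] (star u * x) = lam⁻¹ ^ k • (star u * (⇑Φ)^[k] x) := by
    intro k
    induction k with
    | zero => intro x; simp
    | succ k ih =>
      intro x
      rw [Function.iterate_succ_apply', ih, map_smul, map_mul, hΦu',
        Function.iterate_succ_apply', smul_mul_assoc, smul_smul, pow_succ]
  have iter_add : ∀ (k : ℕ) (x y : A), (⇑Φ)^[k] (x + y) = (⇑Φ)^[k] x + (⇑Φ)^[k] y := by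
    intro k
    induction k with
    | zero => intro x y; simp
    | succ k ih => intro x y; rw [Function.iterate_succ_apply', ih, map_add,
        Function.iterate_succ_apply', Function.iterate_succ_apply']
  have iter_smul : ∀ (k : ℕ) (c : ℂ) (x : A), (⇑Φ)^[k] (c • x) = c • (⇑Φ)^[k] x := by
    intro k
    induction k with
    | zero => intro c x; simp
    | succ k ih => intro c x; rw [Function.iterate_succ_apply', ih, map_smul,
        Function.iterate_succ_apply']
  have iter_norm : ∀ (k : ℕ) (x : A), ‖(⇑Φ)^[k] x‖ ≤ ‖x‖ := by
    intro k
    induction k with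
    | zero => intro x; simp
    | succ k ih => intro x
                   rw [Function.iterate_succ_apply']
                   exact (hΦnorm _).trans (ih x)
  -- E₁ is additive
  have E1_add : ∀ x y : A, E₁ (x + y) = E₁ x + E₁ y := by
    intro x y
    refine tendsto_nhds_unique (hE (x + y)) ?_
    have := (hE x).add (hE y)
    refine this.congr (fun n => ?_)
    rw [← smul_add, ← Finset.sum_add_distrib]
    congr 1
    exact Finset.sum_congr rfl fun k _ => (iter_add k x y).symm
  have E1_smul : ∀ (c : ℂ) (x : A), E₁ (c • x) = c • E₁ x := by
    intro c x
    refine tendsto_nhds_unique (hE (c • x)) ?_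
    have := (hE x).const_smul c
    refine this.congr (fun n => ?_)
    rw [smul_comm]
    congr 1
    rw [Finset.smul_sum]
    exact Finset.sum_congr rfl fun k _ => (iter_smul k c x).symm
  have E1_norm : ∀ x : A, ‖E₁ x‖ ≤ ‖x‖ := by
    intro x
    refine le_of_tendsto' (hE x).norm (fun n => ?_)
    rcases Nat.eq_zero_or_pos n with h | h
    · simp [h]
    calc ‖(n : ℂ)⁻¹ • ∑ k ∈ range n, (⇑Φ)^[k] x‖
        = ‖(n : ℂ)⁻¹‖ * ‖∑ k ∈ range n, (⇑Φ)^[k] x‖ := norm_smul _ _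
      _ ≤ (n : ℝ)⁻¹ * (n * ‖x‖) := by
          refine mul_le_mul (le_of_eq ?_) ?_ (norm_nonneg _) (by positivity)
          · simp
          · calc ‖∑ k ∈ range n, (⇑Φ)^[k] x‖ ≤ ∑ k ∈ range n, ‖(⇑Φ)^[k] x‖ :=
                  norm_sum_le _ _
              _ ≤ ∑ _k ∈ range n, ‖x‖ := Finset.sum_le_sum fun k _ => iter_norm k x
              _ = n * ‖x‖ := by simp [mul_comm]
      _ = ‖x‖ := by
          rw [← mul_assoc, inv_mul_cancel₀ (by exact_mod_cast h.ne' : (n : ℝ) ≠ 0), one_mul]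
  -- E₁ is the identity on fixed points
  have E1_fix : ∀ y : A, Φ y = y → E₁ y = y := by
    intro y hy
    have hiter : ∀ k : ℕ, (⇑Φ)^[k] y = y := by
      intro k
      induction k with
      | zero => simp
      | succ k ih => rw [Function.iterate_succ_apply', ih, hy]
    refine tendsto_nhds_unique (hE y) ?_
    refine Tendsto.congr' ?_ (tendsto_const_nhds (x := y))
    filter_upwards [eventually_ge_atTop 1] with n hn
    have hn0 : (n : ℂ) ≠ 0 := by exact_mod_cast Nat.one_le_iff_ne_zero.mp hn
    simp only [hiter, Finset.sum_const, Finset.card_range]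
    rw [← Nat.cast_smul_eq_nsmul ℂ, smul_smul, inv_mul_cancel₀ hn0, one_smul]
  -- Φ fixes the range of E₁
  have ΦE1 : ∀ y : A, Φ (E₁ y) = E₁ y := by
    intro y
    have h1 : Tendsto (fun n : ℕ => Φ ((n : ℂ)⁻¹ • ∑ k ∈ range n, (⇑Φ)^[k] y))
        atTop (nhds (Φ (E₁ y))) := (hΦcont.tendsto _).comp (hE y)
    refine tendsto_nhds_unique h1 ?_
    have hzero : Tendsto (fun n : ℕ => (n : ℂ)⁻¹ • ((⇑Φ)^[n] y - y)) atTop (nhds 0) := by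
      have hb : ∀ n : ℕ, ‖(n : ℂ)⁻¹ • ((⇑Φ)^[n] y - y)‖ ≤ (n : ℝ)⁻¹ * (2 * ‖y‖) := by
        intro n
        rw [norm_smul]
        refine mul_le_mul (le_of_eq (by simp)) ?_ (norm_nonneg _) (by positivity)
        calc ‖(⇑Φ)^[n] y - y‖ ≤ ‖(⇑Φ)^[n] y‖ + ‖y‖ := norm_sub_le _ _
          _ ≤ ‖y‖ + ‖y‖ := by gcongr; exact iter_norm n y
          _ = 2 * ‖y‖ := by ring
      have hg : Tendsto (fun n : ℕ => (n : ℝ)⁻¹ * (2 * ‖y‖)) atTop (nhds 0) := by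
        have : Tendsto (fun n : ℕ => (n : ℝ)⁻¹) atTop (nhds 0) :=
          tendsto_inv_atTop_zero.comp tendsto_natCast_atTop_atTop
        simpa using this.mul_const (2 * ‖y‖)
      exact squeeze_zero_norm hb hg
    have h2 := (hE y).add hzero
    rw [add_zero] at h2
    refine h2.congr (fun n => ?_)
    rw [map_smul, map_sum, ← smul_add]
    congr 1
    have : ∀ k ∈ range n, Φ ((⇑Φ)^[k] y) = (⇑Φ)^[k+1] y := fun k _ =>
      (Function.iterate_succ_apply' (⇑Φ) k y).symm
    rw [Finset.sum_congr rfl this]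
    have hts : ∑ k ∈ range n, (⇑Φ)^[k+1] y
        = (∑ k ∈ range n, (⇑Φ)^[k] y) + ((⇑Φ)^[n] y - y) := by
      have h1 := Finset.sum_range_succ' (fun k => (⇑Φ)^[k] y) n
      have h2 := Finset.sum_range_succ (fun k => (⇑Φ)^[k] y) n
      have h3 : (∑ k ∈ range n, (⇑Φ)^[k+1] y) + y
          = (∑ k ∈ range n, (⇑Φ)^[k] y) + (⇑Φ)^[n] y := by
        rw [← h2]
        simpa using h1.symm
      rw [← add_sub_assoc, eq_sub_iff_add_eq]
      exact h3
    rw [hts]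
  -- the norm of u
  have hnu : ‖u‖ * ‖u‖ = ‖(1 : A)‖ := by
    rw [← CStarRing.norm_self_mul_star, hu]
  -- MAIN convergence statement
  have main : ∀ x : A,
      Tendsto (fun n : ℕ => (n : ℂ)⁻¹ • ∑ k ∈ range n, lam⁻¹ ^ k • (⇑Φ)^[k] x)
        atTop (nhds (u * E₁ (star u * x))) := by
    intro x
    have := (hE (star u * x)).const_mul u
    refine this.congr (fun n => ?_)
    rw [mul_smul_comm, Finset.mul_sum]
    congr 1
    refine Finset.sum_congr rfl fun k _ => ?_
    rw [key k x, mul_smul_comm, ← mul_assoc, hu, one_mul]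
  refine ⟨main, ?_, ?_, ?_, ?_, ?_⟩
  · intro x y
    rw [mul_add, E1_add, mul_add]
  · intro c x
    rw [mul_smul_comm, E1_smul, mul_smul_comm]
  · intro x
    rcases subsingleton_or_nontrivial A with hA | hA
    · simp [Subsingleton.elim (u * E₁ (star u * x)) 0]
    have h1 : ‖(1 : A)‖ = 1 := norm_one
    calc ‖u * E₁ (star u * x)‖ ≤ ‖u‖ * ‖E₁ (star u * x)‖ := norm_mul_le _ _
      _ ≤ ‖u‖ * ‖star u * x‖ := by gcongr; exact E1_norm _
      _ ≤ ‖u‖ * (‖star u‖ * ‖x‖) := by gcongr; exact norm_mul_le _ _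
      _ = (‖u‖ * ‖u‖) * ‖x‖ := by rw [norm_star]; ring
      _ = ‖x‖ := by rw [hnu, h1, one_mul]
  · intro x
    rw [map_mul, hΦu, ΦE1, smul_mul_assoc]
  · intro y hy
    have hfix : Φ (star u * y) = star u * y := by
      rw [map_mul, hΦu', hy, smul_mul_smul_comm, inv_mul_cancel₀ hlam0, one_smul]
    rw [E1_fix _ hfix, ← mul_assoc, hu, one_mul]
end

section
/- Let (A, Φ) be a C*-dynamical system with Φ a unital *-homomorphism such that the Cesàro averages (1/n)∑_{k<n} Φ^k converge pointwise in norm to E₁. If λ ∈ 𝕋, a ∈ A_λ is invertible, then for every x ∈ A, (1/n) ∑_{k=0}^{n-1} λ^{-k} Φ^k(x) converges in norm and its limit equals both a E₁(a^{-1} x) and E₁(x a^{-1}) a. -/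
open Filter Finset

/-- Suppose the Cesàro averages of the unital *-homomorphism `Φ`
converge pointwise in norm to `E₁`. If `λ ∈ 𝕋` and `a ∈ A_λ` is invertible (with
inverse `b`), then for every `x ∈ A` the averages `(1/n) ∑_{k<n} λ^{-k} Φ^k(x)`
converge in norm, with limit `a E₁(a⁻¹ x) = E₁(x a⁻¹) a`. -/
theorem cesaro_tendsto_of_invertible_eigenvector
    {A : Type*} [NormedRing A] [StarRing A] [CStarRing A] [NormedAlgebra ℂ A]
    [StarModule ℂ A] [CompleteSpace A]
    (Φ : A →⋆ₐ[ℂ] A) (E₁ : A → A)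
    (hE : ∀ x : A,
      Tendsto (fun n : ℕ => (n : ℂ)⁻¹ • ∑ k ∈ range n, (⇑Φ)^[k] x)
        atTop (nhds (E₁ x)))
    (lam : ℂ) (hlam : ‖lam‖ = 1)
    (a b : A) (hab : a * b = 1) (hba : b * a = 1) (hΦa : Φ a = lam • a)
    (x : A) :
    Tendsto (fun n : ℕ => (n : ℂ)⁻¹ • ∑ k ∈ range n, lam⁻¹ ^ k • (⇑Φ)^[k] x)
        atTop (nhds (a * E₁ (b * x))) ∧
      a * E₁ (b * x) = E₁ (x * b) * a := by
  have hlam0 : lam ≠ 0 := by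
    intro h; rw [h, norm_zero] at hlam; norm_num at hlam
  -- Φ b = lam⁻¹ • b
  have hΦb : Φ b = lam⁻¹ • b := by
    have h1 : Φ a * Φ b = 1 := by rw [← map_mul, hab, map_one]
    have h2 : Φ b * Φ a = 1 := by rw [← map_mul, hba, map_one]
    calc Φ b = Φ b * ((lam • a) * (lam⁻¹ • b)) := by
            rw [smul_mul_smul_comm, mul_inv_cancel₀ hlam0, hab, one_smul, mul_one]
      _ = (Φ b * Φ a) * (lam⁻¹ • b) := by rw [← hΦa, mul_assoc]
      _ = lam⁻¹ • b := by rw [h2, one_mul]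
  -- iterate formulas
  have hiterb : ∀ (k : ℕ) (y : A), (⇑Φ)^[k] (b * y) = lam⁻¹ ^ k • (b * (⇑Φ)^[k] y) := by
    intro k
    induction k with
    | zero => intro y; simp
    | succ k ih =>
        intro y
        rw [Function.iterate_succ_apply', ih, map_smul, map_mul, hΦb,
          Function.iterate_succ_apply', smul_mul_assoc, smul_smul, pow_succ, mul_comm]
  have hiterb' : ∀ (k : ℕ) (y : A), (⇑Φ)^[k] (y * b) = lam⁻¹ ^ k • ((⇑Φ)^[k] y * b) := by
    intro k
    induction k with
    | zero => intro y; simp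
    | succ k ih =>
        intro y
        rw [Function.iterate_succ_apply', ih, map_smul, map_mul, hΦb,
          Function.iterate_succ_apply', mul_smul_comm, smul_smul, pow_succ, mul_comm]
  have key1 : (fun n : ℕ => (n : ℂ)⁻¹ • ∑ k ∈ range n, lam⁻¹ ^ k • (⇑Φ)^[k] x)
      = fun n : ℕ => a * ((n : ℂ)⁻¹ • ∑ k ∈ range n, (⇑Φ)^[k] (b * x)) := by
    funext n
    rw [mul_smul_comm, Finset.mul_sum]
    congr 1
    refine Finset.sum_congr rfl fun k _ => ?_
    rw [hiterb, mul_smul_comm, ← mul_assoc, hab, one_mul]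
  have key2 : (fun n : ℕ => (n : ℂ)⁻¹ • ∑ k ∈ range n, lam⁻¹ ^ k • (⇑Φ)^[k] x)
      = fun n : ℕ => ((n : ℂ)⁻¹ • ∑ k ∈ range n, (⇑Φ)^[k] (x * b)) * a := by
    funext n
    rw [smul_mul_assoc, Finset.sum_mul]
    congr 1
    refine Finset.sum_congr rfl fun k _ => ?_
    rw [hiterb', smul_mul_assoc, mul_assoc, hba, mul_one]
  have t1 : Tendsto (fun n : ℕ => (n : ℂ)⁻¹ • ∑ k ∈ range n, lam⁻¹ ^ k • (⇑Φ)^[k] x)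
      atTop (nhds (a * E₁ (b * x))) := by
    rw [key1]
    exact (continuous_mul_left a).continuousAt.tendsto.comp (hE (b * x))
  have t2 : Tendsto (fun n : ℕ => (n : ℂ)⁻¹ • ∑ k ∈ range n, lam⁻¹ ^ k • (⇑Φ)^[k] x)
      atTop (nhds (E₁ (x * b) * a)) := by
    rw [key2]
    exact (continuous_mul_right a).continuousAt.tendsto.comp (hE (x * b))
  exact ⟨t1, tendsto_nhds_unique t1 t2⟩
end

section
/- Let (A, Φ) be a C*-dynamical system whose Cesàro averages converge pointwise in norm to E₁, λ ∈ 𝕋, and suppose a_1,…,a_m, b_1,…,b_m ∈ A_λ satisfy ∑_{j=1}^m a_j* b_j = 1. Then for every x ∈ A, (1/n) ∑_{k=0}^{n-1} λ^{-k} Φ^k(x) converges in norm to ∑_{j=1}^m E₁(x a_j*) b_j. -/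
open Filter Finset

/-- Suppose the Cesàro averages of the unital *-homomorphism `Φ`
converge pointwise in norm to `E₁`, `λ ∈ 𝕋`, and `a₁,…,a_m, b₁,…,b_m ∈ A_λ`
satisfy `∑_j a_j* b_j = 1`. Then for every `x ∈ A` the averages
`(1/n) ∑_{k<n} λ^{-k} Φ^k(x)` converge in norm to `∑_j E₁(x a_j*) b_j`. -/
theorem cesaro_tendsto_of_partition_of_unity
    {A : Type*} [NormedRing A] [StarRing A] [CStarRing A] [NormedAlgebra ℂ A]
    [StarModule ℂ A] [CompleteSpace A]
    (Φ : A →⋆ₐ[ℂ] A) (E₁ : A → A)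
    (hE : ∀ x : A,
      Tendsto (fun n : ℕ => (n : ℂ)⁻¹ • ∑ k ∈ range n, (⇑Φ)^[k] x)
        atTop (nhds (E₁ x)))
    (lam : ℂ) (hlam : ‖lam‖ = 1)
    (m : ℕ) (a b : Fin m → A)
    (ha : ∀ j, Φ (a j) = lam • a j) (hb : ∀ j, Φ (b j) = lam • b j)
    (hsum : ∑ j, star (a j) * b j = 1)
    (x : A) :
    Tendsto (fun n : ℕ => (n : ℂ)⁻¹ • ∑ k ∈ range n, lam⁻¹ ^ k • (⇑Φ)^[k] x)
      atTop (nhds (∑ j, E₁ (x * star (a j)) * b j)) := by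
  have hmul1 : lam * star lam = 1 := by
    rw [show (star lam) = (starRingEnd ℂ) lam from rfl, Complex.mul_conj]
    have : ‖lam‖ = 1 := hlam
    rw [Complex.normSq_eq_norm_sq, this]
    norm_num
  have hstar_eq : star lam = lam⁻¹ := (inv_eq_of_mul_eq_one_right hmul1).symm
  -- Φ on star (a j)
  have hsa : ∀ j, Φ (star (a j)) = lam⁻¹ • star (a j) := by
    intro j
    rw [map_star, ha j, star_smul, hstar_eq]
  -- iterates are multiplicative
  have hiter_mul : ∀ (k : ℕ) (u v : A), (⇑Φ)^[k] (u * v) = (⇑Φ)^[k] u * (⇑Φ)^[k] v := by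
    intro k
    induction k with
    | zero => intro u v; simp
    | succ k ih =>
      intro u v
      simp only [Function.iterate_succ_apply', ih, map_mul]
  -- iterates on star (a j)
  have hiter_a : ∀ (k : ℕ) (j : Fin m), (⇑Φ)^[k] (star (a j)) = lam⁻¹ ^ k • star (a j) := by
    intro k j
    induction k with
    | zero => simp
    | succ k ih =>
      rw [Function.iterate_succ_apply', ih, map_smul, hsa j, smul_smul, pow_succ]
  -- key identity
  have key : ∀ k : ℕ, lam⁻¹ ^ k • (⇑Φ)^[k] x = ∑ j, (⇑Φ)^[k] (x * star (a j)) * b j := by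
    intro k
    calc lam⁻¹ ^ k • (⇑Φ)^[k] x
        = lam⁻¹ ^ k • ((⇑Φ)^[k] x * ∑ j, star (a j) * b j) := by rw [hsum, mul_one]
      _ = ∑ j, lam⁻¹ ^ k • ((⇑Φ)^[k] x * (star (a j) * b j)) := by
          rw [Finset.mul_sum, Finset.smul_sum]
      _ = ∑ j, (⇑Φ)^[k] (x * star (a j)) * b j := by
          refine Finset.sum_congr rfl fun j _ => ?_
          rw [hiter_mul, hiter_a, mul_smul_comm, smul_mul_assoc, mul_assoc]
  have hfun : ∀ n : ℕ, (n : ℂ)⁻¹ • ∑ k ∈ range n, lam⁻¹ ^ k • (⇑Φ)^[k] x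
      = ∑ j, ((n : ℂ)⁻¹ • ∑ k ∈ range n, (⇑Φ)^[k] (x * star (a j))) * b j := by
    intro n
    simp only [key]
    rw [Finset.sum_comm, Finset.smul_sum]
    refine Finset.sum_congr rfl fun j _ => ?_
    rw [smul_mul_assoc, Finset.sum_mul]
  simp only [hfun]
  exact tendsto_finset_sum _ fun j _ => (hE (x * star (a j))).mul_const (b j)
end
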